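/- Let X : [0,1] → ℝ be càdlàg with no negative jumps, and suppose t < t' are two jump times of X such that t' ∈ (t, T) where T = inf{s > t : X(s) = X(t−)} (assuming T exists and X(s) > X(t−) for s ∈ (t,T)). Then T' = inf{s > t' : X(s) = X(t'−)} also lies in (t, T); i.e. the excursion intervals (t,T) associated to distinct jumps are nested. -/

import Mathlib

open Set Filter

/-- Nesting of excursion intervals: if `X` is càdlàg on `[0,1]` with no negative jumps
(`Xm t` denoting the left limit at `t`), `t` is a jump time with first return time
`T = inf{s > t : X s = Xm t}` and `X > Xm t` on `(t,T)`, and `t' ∈ (t,T)` is another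
jump time (with pre-jump level `Xm t' > Xm t`), then
`T' = inf{s > t' : X s = Xm t'}` also lies in `(t,T)`. -/
theorem stmt4 (X Xm : ℝ → ℝ)
    (hright : ∀ t ∈ Icc (0:ℝ) 1, ContinuousWithinAt X (Ici t) t)
    (hleft : ∀ t ∈ Ioc (0:ℝ) 1, Tendsto X (nhdsWithin t (Iio t)) (nhds (Xm t)))
    (hnoneg : ∀ t ∈ Ioc (0:ℝ) 1, Xm t ≤ X t)
    (t t' T : ℝ)
    (ht : t ∈ Ioc (0:ℝ) 1) (hT1 : T ≤ 1) (ht' : t' ∈ Ioo t T)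
    (hjump : Xm t < X t) (hjump' : Xm t' < X t')
    (hlevel : Xm t < Xm t')
    (hTdef : T = sInf {s : ℝ | t < s ∧ X s = Xm t})
    (hTval : X T = Xm t)
    (habove : ∀ s ∈ Ioo t T, Xm t < X s) :
    sInf {s : ℝ | t' < s ∧ X s = Xm t'} ∈ Ioo t T := by
  obtain ⟨htt', ht'T⟩ := ht'
  obtain ⟨h0t, ht1⟩ := ht
  have ht'0 : 0 < t' := h0t.trans htt'
  have ht'1 : t' ≤ 1 := (ht'T.trans_le hT1).le
  set A : Set ℝ := {s | s ∈ Icc t' T ∧ X s ≤ Xm t'} with hA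
  have hTA : T ∈ A := ⟨⟨ht'T.le, le_rfl⟩, by rw [hTval]; exact hlevel.le⟩
  have hAne : A.Nonempty := ⟨T, hTA⟩
  have hAbdd : BddBelow A := ⟨t', fun a ha => ha.1.1⟩
  set s0 := sInf A with hs0
  have hs0T : s0 ≤ T := csInf_le hAbdd hTA
  have hs0t'le : t' ≤ s0 := le_csInf hAne fun a ha => ha.1.1
  -- strict lower bound: t' < s0
  have hst : t' < s0 := by
    have hev : ∀ᶠ s in nhdsWithin t' (Ici t'), Xm t' < X s :=
      (hright t' ⟨ht'0.le, ht'1⟩).eventually (eventually_gt_nhds hjump')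
    rw [eventually_iff, mem_nhdsGE_iff_exists_Ico_subset] at hev
    obtain ⟨u, hu, hsub⟩ := hev
    have hle : u ≤ s0 := le_csInf hAne fun a ha => by
      by_contra h
      exact absurd ha.2 (not_le.2 (hsub ⟨ha.1.1, not_le.1 h⟩))
    exact lt_of_lt_of_le hu hle
  have hs0mem : s0 ∈ Ioc (0:ℝ) 1 := ⟨ht'0.trans hst, hs0T.trans hT1⟩
  -- X > Xm t' strictly before s0
  have habove' : ∀ s ∈ Ioo t' s0, Xm t' < X s := by
    intro s hs
    by_contra h
    have hsA : s ∈ A := ⟨⟨hs.1.le, hs.2.le.trans hs0T⟩, not_lt.1 h⟩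
    exact absurd (csInf_le hAbdd hsA) (not_le.2 hs.2)
  -- left limit at s0 is ≥ Xm t'
  have hXm : Xm t' ≤ Xm s0 := by
    refine ge_of_tendsto (hleft s0 hs0mem) ?_
    filter_upwards [Ioo_mem_nhdsLT_of_mem (⟨hst, le_rfl⟩ : s0 ∈ Ioc t' s0)] with s hs
    exact (habove' s hs).le
  -- X s0 ≤ Xm t' by right continuity along A
  have hXs0le : X s0 ≤ Xm t' := by
    have hsub : A ⊆ Ici s0 := fun a ha => csInf_le hAbdd ha
    have hc : ContinuousWithinAt X A s0 :=
      (hright s0 ⟨hs0mem.1.le, hs0mem.2⟩).mono hsub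
    have hcl : s0 ∈ closure A := csInf_mem_closure hAne hAbdd
    have himg : X s0 ∈ closure (X '' A) := hc.mem_closure_image hcl
    have hsubIic : X '' A ⊆ Iic (Xm t') := by rintro _ ⟨a, ha, rfl⟩; exact ha.2
    have : X s0 ∈ closure (Iic (Xm t')) := closure_mono hsubIic himg
    rwa [closure_Iic] at this
  have hXs0 : X s0 = Xm t' :=
    le_antisymm hXs0le (hXm.trans (hnoneg s0 hs0mem))
  -- s0 < T since X s0 = Xm t' ≠ Xm t = X T
  have hs0T' : s0 < T := lt_of_le_of_ne hs0T (by
    intro h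
    rw [h, hTval] at hXs0
    exact absurd hXs0 hlevel.ne)
  set S : Set ℝ := {s : ℝ | t' < s ∧ X s = Xm t'} with hS
  have hs0S : s0 ∈ S := ⟨hst, hXs0⟩
  have hSbdd : BddBelow S := ⟨t', fun a ha => ha.1.le⟩
  constructor
  · exact htt'.trans_le (le_csInf ⟨s0, hs0S⟩ fun a ha => ha.1.le)
  · exact lt_of_le_of_lt (csInf_le hSbdd hs0S) hs0T'
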